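/- A ring R is strongly 2-nil-clean (every element is the sum of a tripotent and a nilpotent that commute) if and only if every element of R has a Hirano inverse. -/

import Mathlib

def IsHiranoInverse {R : Type*} [Ring R] (a b : R) : Prop :=
  IsNilpotent (a ^ 2 - a * b) ∧ a * b = b * a ∧ b = b * a * b

section CommLemmas

variable {A : Type*} [CommRing A]

private lemma nilmul_r {x : A} (h : IsNilpotent x) (y : A) : IsNilpotent (x * y) :=
  (Commute.all x y).isNilpotent_mul_right h

private lemma nilmul_l {x : A} (h : IsNilpotent x) (y : A) : IsNilpotent (y * x) :=
  (Commute.all y x).isNilpotent_mul_left h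

private lemma niladd {x y : A} (h1 : IsNilpotent x) (h2 : IsNilpotent y) :
    IsNilpotent (x + y) :=
  (Commute.all x y).isNilpotent_add h1 h2

/-- Newton iteration: lifting idempotents. -/
private lemma newton_idem : ∀ k : ℕ, ∀ x : A, (x ^ 2 - x) ^ (2 ^ k) = 0 →
    ∃ e : A, e ^ 2 = e ∧ IsNilpotent (x - e) := by
  intro k
  induction k with
  | zero =>
    intro x hx
    simp only [pow_zero, pow_one] at hx
    exact ⟨x, sub_eq_zero.mp hx, by simp⟩
  | succ k ih =>
    intro x hx
    have hm : IsNilpotent (x ^ 2 - x) := ⟨2 ^ (k + 1), hx⟩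
    have h4 : IsNilpotent (-(4 * (x ^ 2 - x))) := (nilmul_l hm 4).neg
    obtain ⟨v, hv⟩ := h4.isUnit_one_sub.exists_right_inv
    have hu : (2 * x - 1) * ((2 * x - 1) * v) = 1 := by linear_combination hv
    set u := (2 * x - 1) * v with hu_def
    have key : (x - (x ^ 2 - x) * u) ^ 2 - (x - (x ^ 2 - x) * u) = (x ^ 2 - x) ^ 2 * u ^ 2 := by
      linear_combination (-(x ^ 2 - x)) * hu
    have hb : ((x - (x ^ 2 - x) * u) ^ 2 - (x - (x ^ 2 - x) * u)) ^ (2 ^ k) = 0 := by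
      rw [key, mul_pow, ← pow_mul,
        show 2 * 2 ^ k = 2 ^ (k + 1) from by rw [pow_succ, Nat.mul_comm], hx, zero_mul]
    obtain ⟨e, he, hne⟩ := ih _ hb
    refine ⟨e, he, ?_⟩
    have hsplit : x - e = (x ^ 2 - x) * u + ((x - (x ^ 2 - x) * u) - e) := by ring
    rw [hsplit]
    exact niladd (nilmul_r hm u) hne

/-- Newton iteration: lifting tripotents when 3 is nilpotent. -/
private lemma newton_trip (h3 : IsNilpotent (3 : A)) :
    ∀ k : ℕ, ∀ x : A, (x ^ 3 - x) ^ (2 ^ k) = 0 →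
    ∃ p : A, p ^ 3 = p ∧ IsNilpotent (x - p) := by
  intro k
  induction k with
  | zero =>
    intro x hx
    simp only [pow_zero, pow_one] at hx
    exact ⟨x, sub_eq_zero.mp hx, by simp⟩
  | succ k ih =>
    intro x hx
    have h3x : IsNilpotent ((3 : A) * x ^ 2) := nilmul_r h3 _
    obtain ⟨v, hv⟩ := h3x.isUnit_one_sub.exists_right_inv
    have hu : (3 * x ^ 2 - 1) * (-v) = 1 := by linear_combination hv
    have key : (x - (x ^ 3 - x) * (-v)) ^ 3 - (x - (x ^ 3 - x) * (-v)) =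
        (x ^ 3 - x) ^ 2 * (3 * x * (-v) ^ 2 - (x ^ 3 - x) * (-v) ^ 3) := by
      linear_combination (-(x ^ 3 - x)) * hu
    have hb : ((x - (x ^ 3 - x) * (-v)) ^ 3 - (x - (x ^ 3 - x) * (-v))) ^ (2 ^ k) = 0 := by
      rw [key, mul_pow, ← pow_mul,
        show 2 * 2 ^ k = 2 ^ (k + 1) from by rw [pow_succ, Nat.mul_comm], hx, zero_mul]
    obtain ⟨p, hp, hnp⟩ := ih _ hb
    refine ⟨p, hp, ?_⟩
    have hsplit : x - p = (x ^ 3 - x) * (-v) + ((x - (x ^ 3 - x) * (-v)) - p) := by ring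
    rw [hsplit]
    exact niladd (nilmul_r ⟨2 ^ (k + 1), hx⟩ _) hnp

/-- The case where 2 is nilpotent. -/
private lemma case2 (h2 : IsNilpotent (2 : A)) (x : A) (hx : IsNilpotent (x - x ^ 3)) :
    ∃ p : A, p ^ 3 = p ∧ IsNilpotent (x - p) := by
  have hsq : IsNilpotent ((x ^ 2 - x) ^ 2) := by
    have hid : (x ^ 2 - x) ^ 2 = (-x) * (x - x ^ 3) + (2 * (x * (x - x ^ 2))) := by ring
    rw [hid]
    exact niladd (nilmul_l hx (-x)) (nilmul_r h2 _)
  have hm : IsNilpotent (x ^ 2 - x) := hsq.of_pow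
  obtain ⟨N, hN⟩ := hm
  have hN' : (x ^ 2 - x) ^ (2 ^ N) = 0 := pow_eq_zero_of_le (Nat.lt_two_pow_self (n := N)).le hN
  obtain ⟨e, he, hne⟩ := newton_idem N x hN'
  refine ⟨e, ?_, hne⟩
  rw [pow_succ, he, ← pow_two, he]

/-- The case where 3 is nilpotent. -/
private lemma case3 (h3 : IsNilpotent (3 : A)) (x : A) (hx : IsNilpotent (x - x ^ 3)) :
    ∃ p : A, p ^ 3 = p ∧ IsNilpotent (x - p) := by
  obtain ⟨N, hN⟩ := hx.neg
  have hN0 : (x ^ 3 - x) ^ N = 0 := by rw [show x ^ 3 - x = -(x - x ^ 3) from by ring]; exact hN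
  exact newton_trip h3 N x (pow_eq_zero_of_le (Nat.lt_two_pow_self (n := N)).le hN0)

/-- Main commutative lemma: if 6 is nilpotent and `x - x^3` is nilpotent then `x` is a
tripotent plus a nilpotent. -/
private lemma comm_main (h6 : IsNilpotent (6 : A)) (x : A) (hx : IsNilpotent (x - x ^ 3)) :
    ∃ p : A, p ^ 3 = p ∧ IsNilpotent (x - p) := by
  obtain ⟨k0, hk0⟩ := h6
  have hk : (6 : A) ^ (k0 + 1) = 0 := by rw [pow_succ, hk0, zero_mul]
  set k := k0 + 1 with hkdef
  -- Bezout
  have hco : IsCoprime ((2 : ℤ) ^ k) ((3 : ℤ) ^ k) := by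
    apply IsCoprime.pow
    rw [Int.isCoprime_iff_gcd_eq_one]
    decide
  obtain ⟨u, v, huv⟩ := hco
  have huvA : (u : A) * 2 ^ k + (v : A) * 3 ^ k = 1 := by
    have := congrArg (fun t : ℤ => (t : A)) huv
    push_cast at this
    exact this
  set f : A := (u : A) * 2 ^ k with hfdef
  have h1f : 1 - f = (v : A) * 3 ^ k := by rw [hfdef]; linear_combination -huvA
  have h23 : ((2 : A) * 3) ^ k = 0 := by
    rw [show (2 : A) * 3 = 6 from by norm_num, hk]
  have hff : f * (1 - f) = 0 := by
    rw [h1f, hfdef]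
    calc (u : A) * 2 ^ k * ((v : A) * 3 ^ k) = (u : A) * (v : A) * ((2 : A) * 3) ^ k := by
          rw [mul_pow]; ring
    _ = 0 := by rw [h23, mul_zero]
  have h2nil : IsNilpotent ((2 : A) * (1 - f)) := by
    have : (2 : A) * (1 - f) = 6 * ((v : A) * 3 ^ k0) := by
      rw [h1f, hkdef, pow_succ]; ring
    rw [this]
    exact nilmul_r ⟨k0 + 1, hk⟩ _
  have h3nil : IsNilpotent ((3 : A) * f) := by
    have : (3 : A) * f = 6 * ((u : A) * 2 ^ k0) := by
      rw [hfdef, hkdef, pow_succ]; ring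
    rw [this]
    exact nilmul_r ⟨k0 + 1, hk⟩ _
  -- the quotient by span {f} : here 2 is nilpotent
  let I2 : Ideal A := Ideal.span {f}
  let π2 := Ideal.Quotient.mk I2
  have hf0 : π2 f = 0 := Ideal.Quotient.eq_zero_iff_mem.mpr (Ideal.mem_span_singleton_self f)
  have h2B : IsNilpotent (2 : A ⧸ I2) := by
    have hmap := h2nil.map π2
    have he : π2 ((2 : A) * (1 - f)) = 2 := by
      rw [map_mul, map_sub, map_one, hf0, sub_zero, mul_one, map_ofNat]
    rwa [he] at hmap
  have hxB : IsNilpotent (π2 x - (π2 x) ^ 3) := by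
    have := hx.map π2
    rwa [map_sub, map_pow] at this
  obtain ⟨pbar, hpbar, hnbar⟩ := case2 h2B (π2 x) hxB
  obtain ⟨q, hq⟩ := Ideal.Quotient.mk_surjective pbar
  obtain ⟨t, ht⟩ : f ∣ q ^ 3 - q := by
    rw [← Ideal.mem_span_singleton, ← Ideal.Quotient.eq_zero_iff_mem]
    show π2 _ = 0
    rw [map_sub, map_pow, hq, hpbar, sub_self]
  obtain ⟨N, hN⟩ := hnbar
  obtain ⟨s, hs⟩ : f ∣ (x - q) ^ N := by
    rw [← Ideal.mem_span_singleton, ← Ideal.Quotient.eq_zero_iff_mem]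
    show π2 _ = 0
    rw [map_pow, map_sub, hq]
    exact hN
  have e1 : (1 - f) * (1 - f) = 1 - f := by linear_combination -hff
  have hp2 : (q * (1 - f)) ^ 3 = q * (1 - f) := by
    have hcube : (q * (1 - f)) ^ 3 = q ^ 3 * (1 - f) := by
      calc (q * (1 - f)) ^ 3 = q ^ 3 * ((1 - f) * ((1 - f) * (1 - f))) := by ring
      _ = q ^ 3 * (1 - f) := by rw [e1, e1]
    rw [hcube]
    linear_combination (1 - f) * ht + t * hff
  have hn2 : IsNilpotent (x * (1 - f) - q * (1 - f)) := by
    refine ⟨N + 1, ?_⟩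
    have e : x * (1 - f) - q * (1 - f) = (x - q) * (1 - f) := by ring
    rw [e, mul_pow, pow_succ, pow_succ, hs]
    linear_combination (s * (x - q) * (1 - f) ^ N) * hff
  -- the quotient by span {1 - f} : here 3 is nilpotent
  let I3 : Ideal A := Ideal.span {1 - f}
  let π3 := Ideal.Quotient.mk I3
  have hf1 : π3 (1 - f) = 0 :=
    Ideal.Quotient.eq_zero_iff_mem.mpr (Ideal.mem_span_singleton_self _)
  have h3B : IsNilpotent (3 : A ⧸ I3) := by
    have hmap := h3nil.map π3
    have hf1' : π3 f = 1 := by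
      have := hf1
      rw [map_sub, map_one, sub_eq_zero] at this
      exact this.symm
    have he : π3 ((3 : A) * f) = 3 := by
      rw [map_mul, hf1', mul_one, map_ofNat]
    rwa [he] at hmap
  have hxB3 : IsNilpotent (π3 x - (π3 x) ^ 3) := by
    have := hx.map π3
    rwa [map_sub, map_pow] at this
  obtain ⟨rbar, hrbar, hnbar3⟩ := case3 h3B (π3 x) hxB3
  obtain ⟨r, hr⟩ := Ideal.Quotient.mk_surjective rbar
  obtain ⟨t', ht'⟩ : (1 - f) ∣ r ^ 3 - r := by
    rw [← Ideal.mem_span_singleton, ← Ideal.Quotient.eq_zero_iff_mem]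
    show π3 _ = 0
    rw [map_sub, map_pow, hr, hrbar, sub_self]
  obtain ⟨M, hM⟩ := hnbar3
  obtain ⟨s', hs'⟩ : (1 - f) ∣ (x - r) ^ M := by
    rw [← Ideal.mem_span_singleton, ← Ideal.Quotient.eq_zero_iff_mem]
    show π3 _ = 0
    rw [map_pow, map_sub, hr]
    exact hM
  have e2 : f * f = f := by linear_combination -hff
  have hp3 : (r * f) ^ 3 = r * f := by
    have hcube : (r * f) ^ 3 = r ^ 3 * f := by
      calc (r * f) ^ 3 = r ^ 3 * (f * (f * f)) := by ring
      _ = r ^ 3 * f := by rw [e2, e2]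
    rw [hcube]
    linear_combination f * ht' + t' * hff
  have hn3 : IsNilpotent (x * f - r * f) := by
    refine ⟨M + 1, ?_⟩
    have e : x * f - r * f = (x - r) * f := by ring
    rw [e, mul_pow, pow_succ, pow_succ, hs']
    linear_combination (s' * (x - r) * f ^ M) * hff
  -- combine the two parts
  refine ⟨q * (1 - f) + r * f, ?_, ?_⟩
  · have hcross : (q * (1 - f)) * (r * f) = 0 := by linear_combination (q * r) * hff
    linear_combination hp2 + hp3 + (3 * (q * (1 - f)) + 3 * (r * f)) * hcross
  · have e : x - (q * (1 - f) + r * f) = (x * (1 - f) - q * (1 - f)) + (x * f - r * f) := by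
      ring
    rw [e]
    exact niladd hn2 hn3

/-- In a commutative ring, a Hirano inverse forces `a - a^3` nilpotent. -/
private lemma hirano_nil_comm (a b : A) (h1 : IsNilpotent (a ^ 2 - a * b))
    (h3 : b = b * a * b) : IsNilpotent (a - a ^ 3) := by
  have he : (a * b) * (a * b) = a * b := by
    calc (a * b) * (a * b) = a * (b * a * b) := by ring
    _ = a * b := by rw [← h3]
  have key1 : (a * (1 - a * b)) ^ 2 = (a ^ 2 - a * b) * (1 - a * b) := by
    linear_combination (a ^ 2 - 1) * he
  have hn1 : IsNilpotent (a * (1 - a * b)) := by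
    have : IsNilpotent ((a * (1 - a * b)) ^ 2) := by
      rw [key1]; exact nilmul_r h1 _
    exact this.of_pow
  have hsplit : a - a ^ 3 = a * (1 - a * b) + (a ^ 2 - a * b) * (-a) := by ring
  rw [hsplit]
  exact niladd hn1 (nilmul_r h1 _)

/-- Construction of a Hirano inverse from a tripotent-plus-nilpotent decomposition,
in a commutative ring. -/
private lemma forward_comm (p w : A) (hp : p ^ 3 = p) (hw : IsNilpotent w) :
    ∃ b : A, IsNilpotent ((p + w) ^ 2 - (p + w) * b) ∧ b = b * (p + w) * b := by
  have hpw : IsNilpotent (-(p * w)) := (nilmul_l hw p).neg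
  obtain ⟨s, hs⟩ := hpw.isUnit_one_sub.exists_right_inv
  have hs' : (1 + p * w) * s = 1 := by linear_combination hs
  have hab : (p + w) * (s * p) = p ^ 2 := by
    linear_combination (-(w * s)) * hp + p ^ 2 * hs'
  refine ⟨s * p, ?_, ?_⟩
  · have e : (p + w) ^ 2 - (p + w) * (s * p) = w * (2 * p + w) := by
      rw [hab]; ring
    rw [e]
    exact nilmul_r hw _
  · have e : s * p * (p + w) * (s * p) = s * p := by
      rw [mul_assoc, hab]
      linear_combination s * hp
    exact e.symm

end CommLemmas

section Transfer

/-- nilpotency reflects from `R` to a subring. -/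
private lemma nilpotent_of_coe {R : Type*} [Ring R] {S : Subring R} {x : S}
    (h : IsNilpotent (x : R)) : IsNilpotent x :=
  (IsNilpotent.map_iff (f := S.subtype) Subtype.val_injective).mp h

/-- Any Hirano inverse forces `a - a^3` nilpotent, in an arbitrary ring. -/
private lemma hirano_nil {R : Type*} [Ring R] (a b : R) (h : IsHiranoInverse a b) :
    IsNilpotent (a - a ^ 3) := by
  obtain ⟨h1, h2, h3⟩ := h
  set S := Subring.closure ({a, b} : Set R) with hSdef
  letI : CommRing S := Subring.closureCommRingOfComm (by
    rintro x hx y hy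
    simp only [Set.mem_insert_iff, Set.mem_singleton_iff] at hx hy
    rcases hx with rfl | rfl <;> rcases hy with rfl | rfl
    · rfl
    · exact h2
    · exact h2.symm
    · rfl)
  have haS : a ∈ S := Subring.subset_closure (by left; rfl)
  have hbS : b ∈ S := Subring.subset_closure (by right; rfl)
  have h1' : IsNilpotent ((⟨a, haS⟩ : S) ^ 2 - (⟨a, haS⟩ : S) * ⟨b, hbS⟩) := by
    apply nilpotent_of_coe
    push_cast
    exact h1
  have h3' : (⟨b, hbS⟩ : S) = ⟨b, hbS⟩ * ⟨a, haS⟩ * ⟨b, hbS⟩ := by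
    apply Subtype.ext
    push_cast
    exact h3
  have := (hirano_nil_comm _ _ h1' h3').map S.subtype
  simpa using this

end Transfer

theorem stmt10 {R : Type*} [Ring R] :
    (∀ a : R, ∃ p w : R, p ^ 3 = p ∧ IsNilpotent w ∧ p * w = w * p ∧ a = p + w) ↔
    (∀ a : R, ∃ b, IsHiranoInverse a b) := by
  constructor
  · intro h a
    obtain ⟨p, w, hp, hw, hcomm, ha⟩ := h a
    set S := Subring.closure ({p, w} : Set R) with hSdef
    letI : CommRing S := Subring.closureCommRingOfComm (by
      rintro x hx y hy
      simp only [Set.mem_insert_iff, Set.mem_singleton_iff] at hx hy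
      rcases hx with rfl | rfl <;> rcases hy with rfl | rfl
      · rfl
      · exact hcomm
      · exact hcomm.symm
      · rfl)
    have hpS : p ∈ S := Subring.subset_closure (by left; rfl)
    have hwS : w ∈ S := Subring.subset_closure (by right; rfl)
    have hp' : (⟨p, hpS⟩ : S) ^ 3 = ⟨p, hpS⟩ := by
      apply Subtype.ext; push_cast; exact hp
    have hw' : IsNilpotent (⟨w, hwS⟩ : S) := nilpotent_of_coe hw
    obtain ⟨b, hb1, hb3⟩ := forward_comm (⟨p, hpS⟩ : S) ⟨w, hwS⟩ hp' hw'
    have haS : a = (((⟨p, hpS⟩ : S) + ⟨w, hwS⟩ : S) : R) := by push_cast; exact ha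
    refine ⟨(b : R), ?_, ?_, ?_⟩
    · have hmap : IsNilpotent (((((⟨p, hpS⟩ : S) + ⟨w, hwS⟩) ^ 2 -
          ((⟨p, hpS⟩ : S) + ⟨w, hwS⟩) * b : S)) : R) := hb1.map S.subtype
      have e : (((((⟨p, hpS⟩ : S) + ⟨w, hwS⟩) ^ 2 -
          ((⟨p, hpS⟩ : S) + ⟨w, hwS⟩) * b : S)) : R) = a ^ 2 - a * (b : R) := by
        rw [haS]
        push_cast
        rfl
      rwa [e] at hmap
    · rw [haS]
      exact_mod_cast congrArg (Subtype.val) (mul_comm ((⟨p, hpS⟩ : S) + ⟨w, hwS⟩) b)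
    · rw [haS]
      exact_mod_cast congrArg (Subtype.val) hb3
  · intro h a
    have h6 : IsNilpotent (6 : R) := by
      obtain ⟨b2, hb2⟩ := h 2
      have hn := hirano_nil 2 b2 hb2
      have e : (6 : R) = -((2 : R) - 2 ^ 3) := by norm_num
      rw [e]
      exact hn.neg
    obtain ⟨b, hb⟩ := h a
    have hnil := hirano_nil a b hb
    set S := Subring.closure ({a} : Set R) with hSdef
    letI : CommRing S := Subring.closureCommRingOfComm (by
      rintro x hx y hy
      simp only [Set.mem_singleton_iff] at hx hy
      subst hx; subst hy; rfl)
    have haS : a ∈ S := Subring.subset_closure rfl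
    have h6' : IsNilpotent (6 : S) := by
      apply nilpotent_of_coe (x := (6 : S))
      exact_mod_cast h6
    have hn' : IsNilpotent ((⟨a, haS⟩ : S) - (⟨a, haS⟩ : S) ^ 3) := by
      apply nilpotent_of_coe
      push_cast
      exact hnil
    obtain ⟨p, hp, hw⟩ := comm_main h6' (⟨a, haS⟩ : S) hn'
    refine ⟨(p : R), a - (p : R), ?_, ?_, ?_, by abel⟩
    · have := congrArg Subtype.val hp
      push_cast at this
      exact this
    · have := hw.map S.subtype
      simpa using this
    · have e : a - (p : R) = (((⟨a, haS⟩ : S) - p : S) : R) := by push_cast; rfl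
      rw [e]
      exact_mod_cast congrArg Subtype.val (mul_comm p ((⟨a, haS⟩ : S) - p))
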